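/- The curves r(τ) = e^{iτ} and h(τ) = e^{iτ}(-c sec 2τ + i) (in complex notation for ℝ²), with c ∈ ℝ and cos 2τ ≠ 0, satisfy the system r' = c sec(2τ) r + h and h' = -[1 + c(c + 2 sin 2τ) sec²(2τ)] r - c sec(2τ) h, and moreover the determinant [r, h] (i.e. Im(r̄h)) equals 1 for all τ. -/

import Mathlib

/-- the curves `r(τ) = e^{iτ}` and `h(τ) = e^{iτ}(-c sec 2τ + i)`
satisfy `r' = c sec(2τ) r + h`,
`h' = -[1 + c(c + 2 sin 2τ) sec²(2τ)] r - c sec(2τ) h`, and the determinant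
`[r, h] = Im(r̄ h)` equals `1`, wherever `cos 2τ ≠ 0`. -/
theorem stmt19 (c : ℝ) (r w : ℝ → ℂ)
    (hr : ∀ τ, r τ = Complex.exp ((τ : ℂ) * Complex.I))
    (hw : ∀ τ, w τ = Complex.exp ((τ : ℂ) * Complex.I)
      * (-(((c / Real.cos (2 * τ) : ℝ)) : ℂ) + Complex.I)) :
    ∀ τ : ℝ, Real.cos (2 * τ) ≠ 0 →
      deriv r τ = ((c / Real.cos (2 * τ) : ℝ) : ℂ) * r τ + w τ ∧
      deriv w τ =
        -((((1 + c * (c + 2 * Real.sin (2 * τ)) / (Real.cos (2 * τ)) ^ 2 : ℝ)) : ℂ)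
            * r τ)
          - ((c / Real.cos (2 * τ) : ℝ) : ℂ) * w τ ∧
      ((starRingEnd ℂ) (r τ) * w τ).im = 1 := by
  intro τ hcos
  have hre : r = fun τ : ℝ => Complex.exp ((τ : ℂ) * Complex.I) := funext hr
  have hwe : w = fun τ : ℝ => Complex.exp ((τ : ℂ) * Complex.I)
      * (-(((c / Real.cos (2 * τ) : ℝ)) : ℂ) + Complex.I) := funext hw
  -- derivative of exp(τ I)
  have h1 : HasDerivAt (fun τ : ℝ => ((τ : ℂ) * Complex.I))
      Complex.I τ := by
    simpa using ((hasDerivAt_id τ).ofReal_comp.mul_const Complex.I)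
  have hE : HasDerivAt (fun τ : ℝ => Complex.exp ((τ : ℂ) * Complex.I))
      (Complex.exp ((τ : ℂ) * Complex.I) * Complex.I) τ := h1.cexp
  -- derivative of c / cos (2τ)
  have hc2 : HasDerivAt (fun τ : ℝ => Real.cos (2 * τ))
      (-Real.sin (2 * τ) * 2) τ := by
    exact ((Real.hasDerivAt_cos (2 * τ)).comp τ
      ((hasDerivAt_id τ).const_mul 2)).congr_deriv (by ring)
  have hsec : HasDerivAt (fun τ : ℝ => c / Real.cos (2 * τ))
      (c * (2 * Real.sin (2 * τ)) / (Real.cos (2 * τ)) ^ 2) τ := by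
    have := (hasDerivAt_const τ c).div hc2 hcos
    refine this.congr_deriv ?_
    rw [div_eq_div_iff (by positivity) (by positivity)]
    ring
  have hG : HasDerivAt (fun τ : ℝ =>
      (-(((c / Real.cos (2 * τ) : ℝ)) : ℂ) + Complex.I))
      (-((c * (2 * Real.sin (2 * τ)) / (Real.cos (2 * τ)) ^ 2 : ℝ) : ℂ)) τ := by
    simpa using (hsec.ofReal_comp.neg.add_const Complex.I)
  have hW : HasDerivAt w
      (Complex.exp ((τ : ℂ) * Complex.I) * Complex.I
          * (-(((c / Real.cos (2 * τ) : ℝ)) : ℂ) + Complex.I)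
        + Complex.exp ((τ : ℂ) * Complex.I)
          * (-((c * (2 * Real.sin (2 * τ)) / (Real.cos (2 * τ)) ^ 2 : ℝ) : ℂ))) τ := by
    rw [hwe]; exact hE.mul hG
  have hcC : ((Real.cos (2 * τ) : ℝ) : ℂ) ≠ 0 := by exact_mod_cast hcos
  refine ⟨?_, ?_, ?_⟩
  · have hrd : deriv r τ = Complex.exp ((τ : ℂ) * Complex.I) * Complex.I := by
      rw [hre]; exact hE.deriv
    rw [hrd, hr, hw]
    ring
  · rw [hW.deriv, hr, hw]
    push_cast
    field_simp
    ring_nf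
    rw [Complex.I_sq]
    ring
  · rw [hr, hw, ← mul_assoc]
    have h2 : (starRingEnd ℂ) (Complex.exp ((τ:ℂ) * Complex.I))
        * Complex.exp ((τ:ℂ) * Complex.I) = 1 := by
      rw [← Complex.exp_conj, ← Complex.exp_add]
      simp [map_mul, Complex.conj_I]
    rw [h2, one_mul]
    simp only [Complex.add_im, Complex.neg_im, Complex.ofReal_im, Complex.I_im]
    norm_num
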